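/- Let (p_t)_{t ∈ (0,2T]} be probability densities on ℝ^d in C²(ℝ^d) satisfying the convolution semigroup property p_{s+t} = p_s ⋆ p_t for s, t, s+t ∈ (0,2T], and let c : (0,T] → [0,∞). If ∫_{ℝ^d} |∂_{x_i} p_t(x)| dx ≤ c(t) for all t ∈ (0,T] and i ∈ {1,…,d}, then ∫_{ℝ^d} |∂_{x_i} ∂_{x_k} p_{2t}(x)| dx ≤ c(t)² for all t ∈ (0,T] and i, k ∈ {1,…,d}. -/

import Mathlib

open MeasureTheory Filter Set
open scoped ENNReal Topology
noncomputable section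

lemma shift_bound {d : ℕ} {f : EuclideanSpace ℝ (Fin d) → ℝ} (hf : ContDiff ℝ 2 f)
    (e : EuclideanSpace ℝ (Fin d)) {C h : ℝ} (hh : 0 < h)
    (hC : (∫⁻ x, ENNReal.ofReal |fderiv ℝ f x e|) ≤ ENNReal.ofReal C) :
    ∫⁻ x, ENNReal.ofReal |f (x + h • e) - f x| ≤ ENNReal.ofReal (h * C) := by
  have hd : Differentiable ℝ f := hf.differentiable two_ne_zero
  have hfd : Continuous (fun z => fderiv ℝ f z e) := by
    exact ((hf.fderiv_right (m := 1) (by norm_num)).continuous).clm_apply continuous_const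
  have hline : ∀ x : EuclideanSpace ℝ (Fin d), Continuous (fun s : ℝ => x + s • e) :=
    fun x => continuous_const.add (continuous_id.smul continuous_const)
  have key : ∀ x, f (x + h • e) - f x = ∫ s in (0:ℝ)..h, fderiv ℝ f (x + s • e) e := by
    intro x
    have hder : ∀ s ∈ Set.uIcc (0:ℝ) h,
        HasDerivAt (fun s : ℝ => f (x + s • e)) (fderiv ℝ f (x + s • e) e) s := by
      intro s _
      have hc : HasDerivAt (fun s : ℝ => x + s • e) e s := by
        simpa using ((hasDerivAt_id s).smul_const e).const_add x
      exact (hd (x + s • e)).hasFDerivAt.comp_hasDerivAt s hc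
    have hint : IntervalIntegrable (fun s : ℝ => fderiv ℝ f (x + s • e) e) volume 0 h :=
      (hfd.comp (hline x)).intervalIntegrable 0 h
    have := intervalIntegral.integral_eq_sub_of_hasDerivAt hder hint
    rw [this]; simp
  have hb : ∀ x, ENNReal.ofReal |f (x + h • e) - f x|
      ≤ ∫⁻ s in Set.Ioc (0:ℝ) h, ENNReal.ofReal |fderiv ℝ f (x + s • e) e| := by
    intro x
    rw [key x, intervalIntegral.integral_of_le hh.le]
    have habs : |∫ s in Set.Ioc (0:ℝ) h, fderiv ℝ f (x + s • e) e|
        ≤ ∫ s in Set.Ioc (0:ℝ) h, |fderiv ℝ f (x + s • e) e| := by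
      simpa [Real.norm_eq_abs] using
        norm_integral_le_integral_norm (μ := volume.restrict (Set.Ioc (0:ℝ) h))
          (fun s => fderiv ℝ f (x + s • e) e)
    have hint2 : Integrable (fun s : ℝ => |fderiv ℝ f (x + s • e) e|)
        (volume.restrict (Set.Ioc (0:ℝ) h)) := by
      apply ((hfd.comp (hline x)).abs).integrableOn_Ioc
    calc ENNReal.ofReal |∫ s in Set.Ioc (0:ℝ) h, fderiv ℝ f (x + s • e) e|
        ≤ ENNReal.ofReal (∫ s in Set.Ioc (0:ℝ) h, |fderiv ℝ f (x + s • e) e|) :=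
          ENNReal.ofReal_le_ofReal habs
      _ = ∫⁻ s in Set.Ioc (0:ℝ) h, ENNReal.ofReal |fderiv ℝ f (x + s • e) e| :=
          ofReal_integral_eq_lintegral_ofReal hint2
            (Filter.Eventually.of_forall fun s => abs_nonneg _)
  have hmeas : Measurable (Function.uncurry fun (x : EuclideanSpace ℝ (Fin d)) (s : ℝ) =>
      ENNReal.ofReal |fderiv ℝ f (x + s • e) e|) := by
    apply ENNReal.measurable_ofReal.comp
    apply Continuous.measurable
    exact (hfd.comp (continuous_fst.add (continuous_snd.smul continuous_const))).abs
  calc ∫⁻ x, ENNReal.ofReal |f (x + h • e) - f x|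
      ≤ ∫⁻ x, ∫⁻ s in Set.Ioc (0:ℝ) h, ENNReal.ofReal |fderiv ℝ f (x + s • e) e| :=
        lintegral_mono hb
    _ = ∫⁻ s in Set.Ioc (0:ℝ) h, ∫⁻ x, ENNReal.ofReal |fderiv ℝ f (x + s • e) e| :=
        lintegral_lintegral_swap hmeas.aemeasurable
    _ ≤ ∫⁻ _s in Set.Ioc (0:ℝ) h, ENNReal.ofReal C := by
        apply lintegral_mono_ae (Filter.Eventually.of_forall fun s => ?_)
        calc ∫⁻ x, ENNReal.ofReal |fderiv ℝ f (x + s • e) e|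
            = ∫⁻ x, ENNReal.ofReal |fderiv ℝ f x e| :=
              lintegral_add_right_eq_self (fun x => ENNReal.ofReal |fderiv ℝ f x e|) (s • e)
          _ ≤ ENNReal.ofReal C := hC
    _ = ENNReal.ofReal (h * C) := by
        rw [setLIntegral_const, Real.volume_Ioc, sub_zero, mul_comm,
          ← ENNReal.ofReal_mul hh.le]

lemma dd_bound {d : ℕ} {f P : EuclideanSpace ℝ (Fin d) → ℝ}
    (hf_cont : Continuous f) (hf_int : Integrable f volume) (hf_nonneg : ∀ x, 0 ≤ f x)
    (hP : ∀ x, P x = ∫ y, f (x - y) * f y) (a b : EuclideanSpace ℝ (Fin d)) :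
    ∫⁻ x, ENNReal.ofReal |P (x + a + b) - P (x + a) - P (x + b) + P x|
      ≤ (∫⁻ z, ENNReal.ofReal |f (z + a) - f z|) * (∫⁻ z, ENNReal.ofReal |f (z + b) - f z|) := by
  have hfm : Measurable f := hf_cont.measurable
  set F : EuclideanSpace ℝ (Fin d) → ℝ≥0∞ :=
    fun x => ∫⁻ y, ENNReal.ofReal (f (x - y)) * ENNReal.ofReal (f y) with hF
  have hprodmeas : Measurable (fun q : EuclideanSpace ℝ (Fin d) × EuclideanSpace ℝ (Fin d) =>
      ENNReal.ofReal (f (q.1 - q.2)) * ENNReal.ofReal (f q.2)) := by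
    exact (ENNReal.measurable_ofReal.comp
        (hf_cont.comp (continuous_fst.sub continuous_snd)).measurable).mul
      (ENNReal.measurable_ofReal.comp (hfm.comp measurable_snd))
  have hFmeas : Measurable F := hprodmeas.lintegral_prod_right'
  have hFfin : ∫⁻ x, F x ≠ ∞ := by
    have hswap : ∫⁻ x, F x = ∫⁻ y, ∫⁻ x,
        ENNReal.ofReal (f (x - y)) * ENNReal.ofReal (f y) := by
      exact lintegral_lintegral_swap hprodmeas.aemeasurable
    rw [hswap]
    have : ∀ y, (∫⁻ x, ENNReal.ofReal (f (x - y)) * ENNReal.ofReal (f y))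
        = (∫⁻ x, ENNReal.ofReal (f x)) * ENNReal.ofReal (f y) := by
      intro y
      rw [lintegral_mul_const' (ENNReal.ofReal (f y)) _ ENNReal.ofReal_ne_top]
      congr 1
      exact lintegral_sub_right_eq_self (fun x => ENNReal.ofReal (f x)) y
    simp_rw [this]
    rw [lintegral_const_mul' _ _ hf_int.lintegral_lt_top.ne]
    exact ENNReal.mul_ne_top hf_int.lintegral_lt_top.ne hf_int.lintegral_lt_top.ne
  have haefin : ∀ᵐ x, F x < ∞ := ae_lt_top hFmeas hFfin
  have hshift : ∀ u : EuclideanSpace ℝ (Fin d), ∀ᵐ x, F (x + u) < ∞ := fun u =>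
    (measurePreserving_add_right volume u).quasiMeasurePreserving.ae haefin
  -- integrability from finiteness of F
  have key : ∀ u : EuclideanSpace ℝ (Fin d), F u < ∞ →
      Integrable (fun y => f (u - y) * f y) volume := by
    intro u hu
    refine ⟨((hf_cont.comp (continuous_const.sub continuous_id)).mul
      hf_cont).aestronglyMeasurable, ?_⟩
    rw [hasFiniteIntegral_iff_ofReal (Filter.Eventually.of_forall fun y =>
      mul_nonneg (hf_nonneg _) (hf_nonneg _))]
    have : ∀ y, ENNReal.ofReal (f (u - y) * f y)
        = ENNReal.ofReal (f (u - y)) * ENNReal.ofReal (f y) := fun y =>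
      ENNReal.ofReal_mul (hf_nonneg _)
    simp_rw [this]
    exact hu
  have hmain : ∀ᵐ x, ENNReal.ofReal |P (x + a + b) - P (x + a) - P (x + b) + P x|
      ≤ ∫⁻ y, ENNReal.ofReal |f (x - y + a) - f (x - y)| * ENNReal.ofReal |f (y + b) - f y| := by
    filter_upwards [hshift (a + b), hshift a, hshift b, haefin] with x hab ha hb h0
    have Iab : Integrable (fun y => f (x + a + b - y) * f y) volume := by
      have := key (x + (a + b)) hab
      simpa [add_assoc] using this
    have Ia : Integrable (fun y => f (x + a - y) * f y) volume := key (x + a) ha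
    have Ib : Integrable (fun y => f (x + b - y) * f y) volume := key (x + b) hb
    have I0 : Integrable (fun y => f (x - y) * f y) volume := key x h0
    have Iab' : Integrable (fun y => f (x + a - y) * f (y + b)) volume := by
      have h := Iab.comp_add_right b
      refine h.congr (Filter.Eventually.of_forall fun y => ?_)
      congr 2
      abel
    have Ib' : Integrable (fun y => f (x - y) * f (y + b)) volume := by
      have h := Ib.comp_add_right b
      refine h.congr (Filter.Eventually.of_forall fun y => ?_)
      congr 2
      abel
    -- the four convolution identities
    have eab : P (x + a + b) = ∫ y, f (x + a - y) * f (y + b) := by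
      rw [hP (x + a + b)]
      rw [← integral_add_right_eq_self (fun y => f (x + a + b - y) * f y) b]
      congr 1; funext y; congr 2; abel
    have eb : P (x + b) = ∫ y, f (x - y) * f (y + b) := by
      rw [hP (x + b)]
      rw [← integral_add_right_eq_self (fun y => f (x + b - y) * f y) b]
      congr 1; funext y; congr 2; abel
    have hid : P (x + a + b) - P (x + a) - P (x + b) + P x
        = ∫ y, (f (x + a - y) - f (x - y)) * (f (y + b) - f y) := by
      have expand : (fun y => (f (x + a - y) - f (x - y)) * (f (y + b) - f y))
          = fun y => (f (x + a - y) * f (y + b) - f (x - y) * f (y + b))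
            - (f (x + a - y) * f y - f (x - y) * f y) := by
        funext y; ring
      rw [expand,
        integral_sub
          (f := fun y => f (x + a - y) * f (y + b) - f (x - y) * f (y + b))
          (g := fun y => f (x + a - y) * f y - f (x - y) * f y)
          (Iab'.sub Ib') (Ia.sub I0),
        integral_sub Iab' Ib', integral_sub Ia I0, eab, eb, hP (x + a), hP x]
      ring
    rw [hid]
    have g_int : Integrable (fun y => (f (x + a - y) - f (x - y)) * (f (y + b) - f y))
        volume := by
      have expand : (fun y => (f (x + a - y) - f (x - y)) * (f (y + b) - f y))
          = fun y => (f (x + a - y) * f (y + b) - f (x - y) * f (y + b))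
            - (f (x + a - y) * f y - f (x - y) * f y) := by
        funext y; ring
      rw [expand]
      exact (Iab'.sub Ib').sub (Ia.sub I0)
    have habs_int : Integrable
        (fun y => |f (x + a - y) - f (x - y)| * |f (y + b) - f y|) volume := by
      have h := g_int.abs
      simpa [abs_mul] using h
    calc ENNReal.ofReal |∫ y, (f (x + a - y) - f (x - y)) * (f (y + b) - f y)|
        ≤ ENNReal.ofReal (∫ y, |f (x + a - y) - f (x - y)| * |f (y + b) - f y|) := by
          apply ENNReal.ofReal_le_ofReal
          simpa [Real.norm_eq_abs, abs_mul] using norm_integral_le_integral_norm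
            (fun y => (f (x + a - y) - f (x - y)) * (f (y + b) - f y))
      _ = ∫⁻ y, ENNReal.ofReal (|f (x + a - y) - f (x - y)| * |f (y + b) - f y|) :=
          ofReal_integral_eq_lintegral_ofReal habs_int
            (Filter.Eventually.of_forall fun y => mul_nonneg (abs_nonneg _) (abs_nonneg _))
      _ = ∫⁻ y, ENNReal.ofReal |f (x - y + a) - f (x - y)| * ENNReal.ofReal |f (y + b) - f y| := by
          congr 1; funext y
          rw [ENNReal.ofReal_mul (abs_nonneg _)]
          congr 3
          abel
  -- integrate the pointwise bound
  have hum : Measurable (fun q : EuclideanSpace ℝ (Fin d) × EuclideanSpace ℝ (Fin d) =>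
      ENNReal.ofReal |f (q.1 - q.2 + a) - f (q.1 - q.2)| * ENNReal.ofReal |f (q.2 + b) - f q.2|) := by
    have c1 : Continuous (fun q : EuclideanSpace ℝ (Fin d) × EuclideanSpace ℝ (Fin d) =>
        |f (q.1 - q.2 + a) - f (q.1 - q.2)|) := by
      apply Continuous.abs
      exact ((hf_cont.comp ((continuous_fst.sub continuous_snd).add continuous_const)).sub
        (hf_cont.comp (continuous_fst.sub continuous_snd)))
    have c2 : Continuous (fun q : EuclideanSpace ℝ (Fin d) × EuclideanSpace ℝ (Fin d) =>
        |f (q.2 + b) - f q.2|) := by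
      apply Continuous.abs
      exact ((hf_cont.comp (continuous_snd.add continuous_const)).sub
        (hf_cont.comp continuous_snd))
    exact (ENNReal.measurable_ofReal.comp c1.measurable).mul
      (ENNReal.measurable_ofReal.comp c2.measurable)
  calc ∫⁻ x, ENNReal.ofReal |P (x + a + b) - P (x + a) - P (x + b) + P x|
      ≤ ∫⁻ x, ∫⁻ y, ENNReal.ofReal |f (x - y + a) - f (x - y)|
          * ENNReal.ofReal |f (y + b) - f y| := lintegral_mono_ae hmain
    _ = ∫⁻ y, ∫⁻ x, ENNReal.ofReal |f (x - y + a) - f (x - y)|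
          * ENNReal.ofReal |f (y + b) - f y| := lintegral_lintegral_swap hum.aemeasurable
    _ = ∫⁻ y, (∫⁻ z, ENNReal.ofReal |f (z + a) - f z|)
          * ENNReal.ofReal |f (y + b) - f y| := by
        congr 1; funext y
        rw [lintegral_mul_const' (ENNReal.ofReal |f (y + b) - f y|) _ ENNReal.ofReal_ne_top]
        congr 1
        exact lintegral_sub_right_eq_self (fun z => ENNReal.ofReal |f (z + a) - f z|) y
    _ = (∫⁻ z, ENNReal.ofReal |f (z + a) - f z|)
          * ∫⁻ y, ENNReal.ofReal |f (y + b) - f y| := by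
        have hAfin : (∫⁻ z, ENNReal.ofReal |f (z + a) - f z|) ≠ ∞ := by
          have hint : Integrable (fun z => |f (z + a) - f z|) volume :=
            ((hf_int.comp_add_right a).sub hf_int).abs
          exact hint.lintegral_lt_top.ne
        rw [lintegral_const_mul' _ _ hAfin]

section Aux
variable {d : ℕ}

lemma hnorm_nat : Tendsto (fun m : ℕ => ‖(m:ℝ)‖) atTop atTop := by
  simpa [Real.norm_natCast] using tendsto_natCast_atTop_atTop (R := ℝ)

lemma ofReal_cancel {m : ℕ} (hm : 1 ≤ m) (C : ℝ) :
    ENNReal.ofReal (m:ℝ) * ENNReal.ofReal (((m:ℝ))⁻¹ * C) = ENNReal.ofReal C := by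
  have hm0 : (0:ℝ) < (m:ℝ) := by exact_mod_cast hm
  rw [← ENNReal.ofReal_mul hm0.le]
  congr 1
  field_simp

end Aux

/-- **Lemma 4.1(iii).** Let `(p_t)_{t ∈ (0,2T]}` be `C²` probability
densities on `ℝ^d` forming a convolution semigroup. If `∫ |∂_{x_i} p_t(x)| dx ≤ c(t)`
for all `t ∈ (0,T]` and all `i`, then `∫ |∂_{x_i} ∂_{x_k} p_{2t}(x)| dx ≤ c(t)²` for all
`t ∈ (0,T]` and all `i, k`. -/
theorem second_derivative_density_estimate
    {d : ℕ} (T : ℝ) (hT : 0 < T)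
    (p : ℝ → EuclideanSpace ℝ (Fin d) → ℝ)
    (hp_reg : ∀ t ∈ Set.Ioc (0:ℝ) (2*T), ContDiff ℝ 2 (p t))
    (hp_nonneg : ∀ t ∈ Set.Ioc (0:ℝ) (2*T), ∀ x, 0 ≤ p t x)
    (hp_int : ∀ t ∈ Set.Ioc (0:ℝ) (2*T), Integrable (p t) volume)
    (hp_one : ∀ t ∈ Set.Ioc (0:ℝ) (2*T), (∫ x, p t x) = 1)
    (hp_conv : ∀ s t : ℝ, 0 < s → 0 < t → s + t ≤ 2*T →
      ∀ x, p (s + t) x = ∫ y, p s (x - y) * p t y)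
    (c : ℝ → ℝ) (hc : ∀ t ∈ Set.Ioc (0:ℝ) T, 0 ≤ c t)
    (h1 : ∀ t ∈ Set.Ioc (0:ℝ) T, ∀ i : Fin d,
      (∫⁻ x, ENNReal.ofReal |fderiv ℝ (p t) x (EuclideanSpace.single i 1)| ∂volume)
        ≤ ENNReal.ofReal (c t)) :
    ∀ t ∈ Set.Ioc (0:ℝ) T, ∀ i k : Fin d,
      (∫⁻ x, ENNReal.ofReal
          |fderiv ℝ (fun z => fderiv ℝ (p (2*t)) z (EuclideanSpace.single k 1)) x
            (EuclideanSpace.single i 1)| ∂volume)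
        ≤ ENNReal.ofReal (c t ^ 2) := by
  intro t ht i k
  obtain ⟨ht0, htT⟩ := ht
  have h2t : (2*t) ∈ Set.Ioc (0:ℝ) (2*T) := ⟨by linarith, by linarith⟩
  have htIoc : t ∈ Set.Ioc (0:ℝ) (2*T) := ⟨ht0, by linarith⟩
  have hct : 0 ≤ c t := hc t ⟨ht0, htT⟩
  set ek := EuclideanSpace.single k (1:ℝ) with hek
  set ei := EuclideanSpace.single i (1:ℝ) with hei
  set f := p t with hfdef
  set P := p (2*t) with hPdef
  have hPconv : ∀ x, P x = ∫ y, f (x - y) * f y := by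
    intro x
    have h := hp_conv t t ht0 ht0 (by linarith) x
    rw [hPdef, show 2*t = t + t by ring]
    exact h
  have hfC : ContDiff ℝ 2 f := hp_reg t htIoc
  have hPC : ContDiff ℝ 2 P := hp_reg _ h2t
  set G : EuclideanSpace ℝ (Fin d) → ℝ := fun z => fderiv ℝ P z ek with hGdef
  have hGC : ContDiff ℝ 1 G :=
    (hPC.fderiv_right (m := 1) (by norm_num)).clm_apply contDiff_const
  have hGdiff : Differentiable ℝ G := hGC.differentiable one_ne_zero
  have hGcont : Continuous G := hGC.continuous
  have hPdiff : Differentiable ℝ P := hPC.differentiable two_ne_zero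
  have hPcont : Continuous P := hPC.continuous
  -- bound on L¹ modulus of continuity of f, in the directions ei / ek
  have hA : ∀ (j : Fin d) (n : ℕ), 1 ≤ n →
      (∫⁻ z, ENNReal.ofReal |f (z + ((n:ℝ)⁻¹) • EuclideanSpace.single j (1:ℝ)) - f z|)
        ≤ ENNReal.ofReal ((n:ℝ)⁻¹ * c t) := by
    intro j n hn
    have hn0 : (0:ℝ) < (n:ℝ)⁻¹ := by
      have : (0:ℝ) < (n:ℝ) := by exact_mod_cast hn
      positivity
    exact shift_bound hfC _ hn0 (h1 t ⟨ht0, htT⟩ j)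
  -- Level 2
  have level2 : ∀ v : EuclideanSpace ℝ (Fin d),
      (∫⁻ x, ENNReal.ofReal |G (x + v) - G x|)
        ≤ (∫⁻ z, ENNReal.ofReal |f (z + v) - f z|) * ENNReal.ofReal (c t) := by
    intro v
    set A : ℝ≥0∞ := ∫⁻ z, ENNReal.ofReal |f (z + v) - f z| with hAdef
    have hten : ∀ x : EuclideanSpace ℝ (Fin d),
        Tendsto (fun m : ℕ => ENNReal.ofReal
          |(m:ℝ) * (P (x + v + ((m:ℝ))⁻¹ • ek) - P (x + v) - (P (x + ((m:ℝ))⁻¹ • ek) - P x))|)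
          atTop (𝓝 (ENNReal.ofReal |G (x + v) - G x|)) := by
      intro x
      have t1 := (hPdiff (x + v)).hasFDerivAt.lim ek hnorm_nat
      have t2 := (hPdiff x).hasFDerivAt.lim ek hnorm_nat
      have t3 := t1.sub t2
      have t4 : Tendsto (fun m : ℕ =>
          (m:ℝ) * (P (x + v + ((m:ℝ))⁻¹ • ek) - P (x + v) - (P (x + ((m:ℝ))⁻¹ • ek) - P x)))
          atTop (𝓝 (G (x + v) - G x)) := by
        refine t3.congr fun m => ?_
        simp only [smul_eq_mul]
        ring
      exact ((ENNReal.continuous_ofReal.comp continuous_abs).tendsto _).comp t4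
    have hmeas : ∀ m : ℕ, Measurable (fun x => ENNReal.ofReal
        |(m:ℝ) * (P (x + v + ((m:ℝ))⁻¹ • ek) - P (x + v) - (P (x + ((m:ℝ))⁻¹ • ek) - P x))|) := by
      intro m
      apply ENNReal.measurable_ofReal.comp
      apply Continuous.measurable
      apply Continuous.abs
      apply Continuous.mul continuous_const
      exact (((hPcont.comp ((continuous_id.add continuous_const).add
        continuous_const)).sub (hPcont.comp (continuous_id.add continuous_const))).sub
        ((hPcont.comp (continuous_id.add continuous_const)).sub hPcont))
    have hbound : ∀ m : ℕ, 1 ≤ m →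
        (∫⁻ x, ENNReal.ofReal
          |(m:ℝ) * (P (x + v + ((m:ℝ))⁻¹ • ek) - P (x + v) - (P (x + ((m:ℝ))⁻¹ • ek) - P x))|)
          ≤ A * ENNReal.ofReal (c t) := by
      intro m hm
      have hsplit : ∀ x, ENNReal.ofReal
          |(m:ℝ) * (P (x + v + ((m:ℝ))⁻¹ • ek) - P (x + v) - (P (x + ((m:ℝ))⁻¹ • ek) - P x))|
          = ENNReal.ofReal (m:ℝ) * ENNReal.ofReal
            |P (x + v + ((m:ℝ))⁻¹ • ek) - P (x + v) - (P (x + ((m:ℝ))⁻¹ • ek) - P x)| := by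
        intro x
        rw [abs_mul, ENNReal.ofReal_mul (abs_nonneg _)]
        congr 2
        exact abs_of_nonneg (Nat.cast_nonneg m)
      simp_rw [hsplit]
      rw [lintegral_const_mul' _ _ ENNReal.ofReal_ne_top]
      have hrw : ∀ x, P (x + v + ((m:ℝ))⁻¹ • ek) - P (x + v) - (P (x + ((m:ℝ))⁻¹ • ek) - P x)
          = P (x + v + ((m:ℝ))⁻¹ • ek) - P (x + v) - P (x + ((m:ℝ))⁻¹ • ek) + P x := by
        intro x; ring
      have hdd := dd_bound hfC.continuous (hp_int t htIoc) (hp_nonneg t htIoc) hPconv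
        v (((m:ℝ))⁻¹ • ek)
      calc ENNReal.ofReal (m:ℝ) * ∫⁻ x, ENNReal.ofReal
            |P (x + v + ((m:ℝ))⁻¹ • ek) - P (x + v) - (P (x + ((m:ℝ))⁻¹ • ek) - P x)|
          = ENNReal.ofReal (m:ℝ) * ∫⁻ x, ENNReal.ofReal
            |P (x + v + ((m:ℝ))⁻¹ • ek) - P (x + v) - P (x + ((m:ℝ))⁻¹ • ek) + P x| := by
            congr 1
            apply lintegral_congr
            intro x
            rw [hrw x]
        _ ≤ ENNReal.ofReal (m:ℝ) * (A * ∫⁻ z, ENNReal.ofReal |f (z + ((m:ℝ))⁻¹ • ek) - f z|) :=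
            mul_le_mul_right hdd _
        _ ≤ ENNReal.ofReal (m:ℝ) * (A * ENNReal.ofReal (((m:ℝ))⁻¹ * c t)) :=
            mul_le_mul_right (mul_le_mul_right (hA k m hm) _) _
        _ = A * (ENNReal.ofReal (m:ℝ) * ENNReal.ofReal (((m:ℝ))⁻¹ * c t)) := by ring
        _ = A * ENNReal.ofReal (c t) := by rw [ofReal_cancel hm]
    calc (∫⁻ x, ENNReal.ofReal |G (x + v) - G x|)
        = ∫⁻ x, liminf (fun m : ℕ => ENNReal.ofReal
          |(m:ℝ) * (P (x + v + ((m:ℝ))⁻¹ • ek) - P (x + v) - (P (x + ((m:ℝ))⁻¹ • ek) - P x))|)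
          atTop := lintegral_congr fun x => ((hten x).liminf_eq).symm
      _ ≤ liminf (fun m : ℕ => ∫⁻ x, ENNReal.ofReal
          |(m:ℝ) * (P (x + v + ((m:ℝ))⁻¹ • ek) - P (x + v) - (P (x + ((m:ℝ))⁻¹ • ek) - P x))|)
          atTop := lintegral_liminf_le hmeas
      _ ≤ A * ENNReal.ofReal (c t) := by
          refine (Filter.liminf_le_liminf (Filter.eventually_atTop.mpr ⟨1, hbound⟩)).trans ?_
          simp [Filter.liminf_const]
  -- Level 1
  have hten1 : ∀ x : EuclideanSpace ℝ (Fin d),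
      Tendsto (fun n : ℕ => ENNReal.ofReal |(n:ℝ) * (G (x + ((n:ℝ))⁻¹ • ei) - G x)|)
        atTop (𝓝 (ENNReal.ofReal |fderiv ℝ G x ei|)) := by
    intro x
    have t1 := (hGdiff x).hasFDerivAt.lim ei hnorm_nat
    have t2 : Tendsto (fun n : ℕ => (n:ℝ) * (G (x + ((n:ℝ))⁻¹ • ei) - G x))
        atTop (𝓝 (fderiv ℝ G x ei)) := by
      refine t1.congr fun n => ?_
      simp only [smul_eq_mul]
    exact ((ENNReal.continuous_ofReal.comp continuous_abs).tendsto _).comp t2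
  have hmeas1 : ∀ n : ℕ, Measurable (fun x =>
      ENNReal.ofReal |(n:ℝ) * (G (x + ((n:ℝ))⁻¹ • ei) - G x)|) := by
    intro n
    apply ENNReal.measurable_ofReal.comp
    apply Continuous.measurable
    exact (continuous_const.mul ((hGcont.comp
      (continuous_id.add continuous_const)).sub hGcont)).abs
  have hbound1 : ∀ n : ℕ, 1 ≤ n →
      (∫⁻ x, ENNReal.ofReal |(n:ℝ) * (G (x + ((n:ℝ))⁻¹ • ei) - G x)|)
        ≤ ENNReal.ofReal (c t ^ 2) := by
    intro n hn
    have hsplit : ∀ x, ENNReal.ofReal |(n:ℝ) * (G (x + ((n:ℝ))⁻¹ • ei) - G x)|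
        = ENNReal.ofReal (n:ℝ) * ENNReal.ofReal |G (x + ((n:ℝ))⁻¹ • ei) - G x| := by
      intro x
      rw [abs_mul, ENNReal.ofReal_mul (abs_nonneg _)]
      congr 2
      exact abs_of_nonneg (Nat.cast_nonneg n)
    simp_rw [hsplit]
    rw [lintegral_const_mul' _ _ ENNReal.ofReal_ne_top]
    calc ENNReal.ofReal (n:ℝ) * ∫⁻ x, ENNReal.ofReal |G (x + ((n:ℝ))⁻¹ • ei) - G x|
        ≤ ENNReal.ofReal (n:ℝ) *
          ((∫⁻ z, ENNReal.ofReal |f (z + ((n:ℝ))⁻¹ • ei) - f z|) * ENNReal.ofReal (c t)) :=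
          mul_le_mul_right (level2 _) _
      _ ≤ ENNReal.ofReal (n:ℝ) * (ENNReal.ofReal (((n:ℝ))⁻¹ * c t) * ENNReal.ofReal (c t)) :=
          mul_le_mul_right (mul_le_mul_left (hA i n hn) _) _
      _ = (ENNReal.ofReal (n:ℝ) * ENNReal.ofReal (((n:ℝ))⁻¹ * c t)) * ENNReal.ofReal (c t) := by
          ring
      _ = ENNReal.ofReal (c t) * ENNReal.ofReal (c t) := by rw [ofReal_cancel hn]
      _ = ENNReal.ofReal (c t ^ 2) := by
          rw [← ENNReal.ofReal_mul hct]
          ring_nf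
  calc (∫⁻ x, ENNReal.ofReal |fderiv ℝ G x ei|)
      = ∫⁻ x, liminf (fun n : ℕ =>
          ENNReal.ofReal |(n:ℝ) * (G (x + ((n:ℝ))⁻¹ • ei) - G x)|) atTop :=
        lintegral_congr fun x => ((hten1 x).liminf_eq).symm
    _ ≤ liminf (fun n : ℕ => ∫⁻ x,
          ENNReal.ofReal |(n:ℝ) * (G (x + ((n:ℝ))⁻¹ • ei) - G x)|) atTop :=
        lintegral_liminf_le hmeas1
    _ ≤ ENNReal.ofReal (c t ^ 2) := by
        refine (Filter.liminf_le_liminf (Filter.eventually_atTop.mpr ⟨1, hbound1⟩)).trans ?_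
        simp [Filter.liminf_const]

end
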